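/- Let R = K[x_1,x_2,x_3] over a field K and I = (x_1x_2, x_1x_3, x_2x_3). Then for every s ≥ 2 the Hilbert series of R/I^s is H(R/I^s, t) = (1 + 2t + 3t^2 + ⋯ + 2s·t^{2s−1} − (C(s+2,2) − 2s − 1)·t^{2s}) / (1 − t), i.e., the numerator is Σ_{i=0}^{2s−1} (i+1)t^i − (C(s+2,2) − 2s − 1)t^{2s}. -/

import Mathlib

open MvPolynomial

/-- A vertex cover of a simple graph: a set of vertices meeting every edge. -/
def IsVertexCover {V : Type} (G : SimpleGraph V) (w : Finset V) : Prop :=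
  ∀ ⦃a b : V⦄, G.Adj a b → a ∈ w ∨ b ∈ w

/-- The cover ideal of a finite simple graph `G`: the ideal of the polynomial ring
`K[x_v : v ∈ V]` generated by the monomials `∏_{x ∈ w} x` over all vertex covers `w`. -/
noncomputable def coverIdeal (K : Type) [Field K] {V : Type} [Fintype V]
    (G : SimpleGraph V) : Ideal (MvPolynomial V K) :=
  Ideal.span { p | ∃ w : Finset V, IsVertexCover G w ∧ p = ∏ x ∈ w, X x }

/-- The linear map `(c_j) ↦ ∑_j c_j • v_j`. -/
noncomputable def lcomb {R M : Type} [CommRing R] [AddCommGroup M] [Module R M]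
    {ι : Type} [Fintype ι] (v : ι → M) : (ι → R) →ₗ[R] M :=
  Fintype.linearCombination R v

/-- A minimal graded free resolution
`0 → F_len → ⋯ → F_2 → F_1 → R → R/I → 0`
of the quotient of `R = K[x_1,…,x_N]` by a homogeneous ideal `I`, where
`F_i = ⊕_{j < rank i} R(-(deg i j))` is a graded free module.
The map `F_1 → R` sends the `j`-th basis vector to `gen j`, and for `i ≥ 1` the map
`F_{i+1} → F_i` is given by the matrix `mat (i-1)` (acting by `Matrix.mulVec`);
all maps are graded (entries are homogeneous of the appropriate degrees), the
complex is exact at every `F_i`, the image of `F_1 → R` is `I`, and minimality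
means that all matrix entries (and the generators) lie in the graded maximal ideal,
i.e. have vanishing constant coefficient. -/
structure MinimalGradedFreeResolution {K : Type} [Field K] {σ : Type}
    (I : Ideal (MvPolynomial σ K)) where
  len : ℕ
  rank : ℕ → ℕ
  deg : ∀ i : ℕ, Fin (rank i) → ℕ
  gen : Fin (rank 1) → MvPolynomial σ K
  mat : ∀ i : ℕ, Matrix (Fin (rank (i + 1))) (Fin (rank (i + 2))) (MvPolynomial σ K)
  rank_pos : ∀ i, 1 ≤ i → i ≤ len → 0 < rank i
  rank_zero : ∀ i, len < i → rank i = 0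
  span_gen : Ideal.span (Set.range gen) = I
  gen_hom : ∀ j, (gen j).IsHomogeneous (deg 1 j)
  mat_hom : ∀ i p q, mat i p q = 0 ∨
    (deg (i + 1) p ≤ deg (i + 2) q ∧
      (mat i p q).IsHomogeneous (deg (i + 2) q - deg (i + 1) p))
  exact_one : Function.Exact ⇑((mat 0).mulVecLin) ⇑(lcomb gen)
  exact_succ : ∀ i, Function.Exact ⇑((mat (i + 1)).mulVecLin) ⇑((mat i).mulVecLin)
  minimal_gen : ∀ j, constantCoeff (gen j) = 0
  minimal_mat : ∀ i p q, constantCoeff (mat i p q) = 0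

namespace MinimalGradedFreeResolution

variable {K : Type} [Field K] {σ : Type} {I : Ideal (MvPolynomial σ K)}

/-- The Castelnuovo–Mumford regularity of the ideal `I`, read off from a minimal graded
free resolution of `R/I`: `reg I = max_{i ≥ 0} (t_i(I) - i)` where
`t_i(I) = t_{i+1}(R/I)` is the largest twist in homological degree `i + 1`. -/
def regIdeal (res : MinimalGradedFreeResolution I) : ℕ :=
  Finset.sup (Finset.range res.len)
    (fun i => (Finset.univ.sup fun j => res.deg (i + 1) j) - i)

/-- The Castelnuovo–Mumford regularity of the module `R/I`, read off from a minimal graded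
free resolution: `reg (R/I) = max_{i ≥ 0} (t_i(R/I) - i)` (the `i = 0` term is `0`). -/
def regQuot (res : MinimalGradedFreeResolution I) : ℕ :=
  Finset.sup (Finset.range res.len)
    (fun i => (Finset.univ.sup fun j => res.deg (i + 1) j) - (i + 1))

end MinimalGradedFreeResolution

/-- The minimal number of generators of an ideal. -/
noncomputable def muIdeal {R : Type} [CommRing R] (I : Ideal R) : ℕ :=
  sInf {k | ∃ s : Finset R, s.card = k ∧ Ideal.span (s : Set R) = I}

/-- The Hilbert function of `R/I` for a homogeneous ideal `I` of `R = K[x_1,…,x_N]`: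
`d ↦ dim_K (R/I)_d = dim_K R_d - dim_K I_d`. -/
noncomputable def hilbQuot {K : Type} [Field K] {σ : Type}
    (I : Ideal (MvPolynomial σ K)) (d : ℕ) : ℕ :=
  Module.finrank K (homogeneousSubmodule σ K d) -
    Module.finrank K
      ((Submodule.restrictScalars K (I : Submodule (MvPolynomial σ K) (MvPolynomial σ K)) ⊓
        homogeneousSubmodule σ K d : Submodule K (MvPolynomial σ K)))

/-- `f 0, …, f (k-1)` is a regular sequence on `R`: each `f i` is a nonzerodivisor
modulo the previous ones, and the `f i` generate a proper ideal. -/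
def IsRegSeq {R : Type} [CommRing R] {k : ℕ} (f : Fin k → R) : Prop :=
  (∀ i : Fin k, ∀ r : R, f i * r ∈ Ideal.span (f '' {j | j < i}) →
      r ∈ Ideal.span (f '' {j | j < i})) ∧
  Ideal.span (Set.range f) ≠ ⊤

namespace HilbC3

open Finsupp Pointwise


abbrev F3 := Fin 3 →₀ ℕ

noncomputable def trip (u v w : ℕ) : F3 :=
  Finsupp.single 0 u + Finsupp.single 1 v + Finsupp.single 2 w

@[simp] lemma trip_apply0 (u v w : ℕ) : trip u v w 0 = u := by
  simp [trip, Finsupp.single_apply]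

@[simp] lemma trip_apply1 (u v w : ℕ) : trip u v w 1 = v := by
  simp [trip, Finsupp.single_apply]

@[simp] lemma trip_apply2 (u v w : ℕ) : trip u v w 2 = w := by
  simp [trip, Finsupp.single_apply]

lemma eq_trip (f : F3) : f = trip (f 0) (f 1) (f 2) := by
  ext a
  fin_cases a <;> simp

lemma trip_add (u v w u' v' w' : ℕ) :
    trip u v w + trip u' v' w' = trip (u+u') (v+v') (w+w') := by
  ext a; fin_cases a <;> simp

lemma degree_eq (f : F3) : f.degree = f 0 + f 1 + f 2 := by
  rw [Finsupp.degree_apply, Finset.sum_subset (Finset.subset_univ f.support)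
    (fun i _ hi => Finsupp.notMem_support_iff.mp hi), Fin.sum_univ_three]


def Es (s : ℕ) : Set F3 :=
  {e | ∃ a b c : ℕ, a + b + c = s ∧ e = trip (a+b) (a+c) (b+c)}

variable {K : Type} [Field K]

lemma Es_zero : Es 0 = {0} := by
  ext e
  constructor
  · rintro ⟨a, b, c, h, rfl⟩
    have ha : a = 0 := by omega
    have hb : b = 0 := by omega
    have hc : c = 0 := by omega
    subst ha hb hc
    simp only [Set.mem_singleton_iff]
    ext i; fin_cases i <;> simp
  · rintro rfl
    exact ⟨0, 0, 0, rfl, by ext i; fin_cases i <;> simp⟩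

lemma Es_one : Es 1 = {trip 1 1 0, trip 1 0 1, trip 0 1 1} := by
  ext e
  constructor
  · rintro ⟨a, b, c, h, rfl⟩
    have : (a = 1 ∧ b = 0 ∧ c = 0) ∨ (a = 0 ∧ b = 1 ∧ c = 0) ∨ (a = 0 ∧ b = 0 ∧ c = 1) := by
      omega
    rcases this with ⟨rfl, rfl, rfl⟩ | ⟨rfl, rfl, rfl⟩ | ⟨rfl, rfl, rfl⟩ <;> simp [Set.mem_insert_iff]
  · intro h
    rcases h with rfl | rfl | rfl
    · exact ⟨1, 0, 0, rfl, rfl⟩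
    · exact ⟨0, 1, 0, rfl, rfl⟩
    · exact ⟨0, 0, 1, rfl, rfl⟩

lemma image_Es_one :
    (fun e => monomial e (1:K)) '' Es 1 = {X 0 * X 1, X 0 * X 2, X 1 * X 2} := by
  rw [Es_one]
  have h0 : ∀ i j : Fin 3, (X i * X j : MvPolynomial (Fin 3) K)
      = monomial (Finsupp.single i 1 + Finsupp.single j 1) 1 := by
    intro i j
    rw [X, X, monomial_mul, one_mul]
  have e1 : trip 1 1 0 = Finsupp.single (0 : Fin 3) 1 + Finsupp.single 1 1 := by
    ext a; fin_cases a <;> simp [Finsupp.single_apply]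
  have e2 : trip 1 0 1 = Finsupp.single (0 : Fin 3) 1 + Finsupp.single 2 1 := by
    ext a; fin_cases a <;> simp [Finsupp.single_apply]
  have e3 : trip 0 1 1 = Finsupp.single (1 : Fin 3) 1 + Finsupp.single 2 1 := by
    ext a; fin_cases a <;> simp [Finsupp.single_apply]
  rw [Set.image_insert_eq, Set.image_insert_eq, Set.image_singleton,
    h0, h0, h0, e1, e2, e3]

lemma trip_ext {x y z x' y' z' : ℕ} (h1 : x = x') (h2 : y = y') (h3 : z = z') :
    trip x y z = trip x' y' z' := by subst h1 h2 h3; rfl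

lemma mon_mul (e e' : F3) :
    monomial e (1:K) * monomial e' 1 = monomial (e + e') 1 := by
  rw [monomial_mul, one_mul]

lemma Es_add {m m' : ℕ} {e e' : F3} (h : e ∈ Es m) (h' : e' ∈ Es m') :
    e + e' ∈ Es (m + m') := by
  obtain ⟨a, b, c, hs, rfl⟩ := h
  obtain ⟨a', b', c', hs', rfl⟩ := h'
  exact ⟨a+a', b+b', c+c', by omega,
    by rw [trip_add]; exact trip_ext (by omega) (by omega) (by omega)⟩

lemma Es_split {n : ℕ} {e : F3} (h : e ∈ Es (n+1)) :
    ∃ e1 ∈ Es n, ∃ e2 ∈ Es 1, e = e1 + e2 := by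
  obtain ⟨a, b, c, hs, rfl⟩ := h
  rcases Nat.eq_zero_or_pos a with rfl | ha
  · rcases Nat.eq_zero_or_pos b with rfl | hb
    · exact ⟨trip 0 (c-1) (c-1), ⟨0, 0, c-1, by omega, trip_ext (by omega) (by omega) (by omega)⟩,
        trip 0 1 1, ⟨0, 0, 1, rfl, rfl⟩,
        by rw [trip_add]; exact trip_ext (by omega) (by omega) (by omega)⟩
    · exact ⟨trip (b-1) c (b-1+c), ⟨0, b-1, c, by omega, trip_ext (by omega) (by omega) (by omega)⟩,
        trip 1 0 1, ⟨0, 1, 0, rfl, rfl⟩,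
        by rw [trip_add]; exact trip_ext (by omega) (by omega) (by omega)⟩
  · exact ⟨trip (a-1+b) (a-1+c) (b+c), ⟨a-1, b, c, by omega, rfl⟩,
      trip 1 1 0, ⟨1, 0, 0, rfl, rfl⟩,
      by rw [trip_add]; exact trip_ext (by omega) (by omega) (by omega)⟩

lemma image_Es_mul (n : ℕ) :
    ((fun e => monomial e (1:K)) '' Es n) * ((fun e => monomial e (1:K)) '' Es 1)
      = (fun e => monomial e (1:K)) '' Es (n+1) := by
  ext p
  constructor
  · intro hp
    rw [Set.mem_mul] at hp
    obtain ⟨q, hq, r, hr, rfl⟩ := hp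
    obtain ⟨e, he, rfl⟩ := hq
    obtain ⟨e', he', rfl⟩ := hr
    exact ⟨e + e', Es_add he he', (mon_mul e e').symm⟩
  · rintro ⟨e, he, rfl⟩
    obtain ⟨e1, h1, e2, h2, rfl⟩ := Es_split he
    show monomial (e1 + e2) (1:K) ∈ _
    rw [← mon_mul]
    exact Set.mul_mem_mul ⟨e1, h1, rfl⟩ ⟨e2, h2, rfl⟩

lemma span_pow (s : ℕ) :
    (Ideal.span {X 0 * X 1, X 0 * X 2, X 1 * X 2} : Ideal (MvPolynomial (Fin 3) K)) ^ s
      = Ideal.span ((fun e => monomial e (1:K)) '' Es s) := by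
  induction s with
  | zero =>
    rw [pow_zero, Es_zero, Set.image_singleton]
    have : (monomial (0 : F3) (1:K)) = 1 := by
      rw [monomial_zero', C_1]
    rw [this, Ideal.span_singleton_one]
    exact Ideal.one_eq_top
  | succ n ih =>
    rw [pow_succ, ih, ← image_Es_one (K := K), Ideal.span_mul_span', image_Es_mul]


lemma coeff_span_monomials {E : Set F3} {p : MvPolynomial (Fin 3) K}
    (hp : p ∈ Ideal.span ((fun e => monomial e (1:K)) '' E)) :
    ∀ f : F3, coeff f p ≠ 0 → ∃ e ∈ E, e ≤ f := by
  refine Submodule.span_induction ?_ ?_ ?_ ?_ hp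
  · rintro x ⟨e, he, rfl⟩ f hf
    rw [coeff_monomial] at hf
    split_ifs at hf with h
    · subst h
      exact ⟨e, he, le_refl e⟩
    · exact absurd rfl hf
  · intro f hf
    simp at hf
  · intro x y _ _ hx hy f hf
    rw [coeff_add] at hf
    rcases (by by_contra h; push_neg at h; rw [h.1, h.2, add_zero] at hf; exact hf rfl :
      coeff f x ≠ 0 ∨ coeff f y ≠ 0) with h | h
    · exact hx f h
    · exact hy f h
  · intro r x _ hx f hf
    rw [smul_eq_mul, coeff_mul] at hf
    obtain ⟨⟨u, v⟩, huv, hne⟩ := Finset.exists_ne_zero_of_sum_ne_zero hf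
    rw [Finset.HasAntidiagonal.mem_antidiagonal] at huv
    obtain ⟨e, he, hev⟩ := hx v (fun h0 => hne (by rw [h0, mul_zero]))
    exact ⟨e, he, le_trans hev (by rw [← huv]; exact le_add_self)⟩

lemma monomial_mem_span_iff {E : Set F3} {f : F3} :
    monomial f (1:K) ∈ Ideal.span ((fun e => monomial e (1:K)) '' E) ↔ ∃ e ∈ E, e ≤ f := by
  constructor
  · intro h
    refine coeff_span_monomials h f ?_
    rw [coeff_monomial, if_pos rfl]
    exact one_ne_zero
  · rintro ⟨e, he, hef⟩
    have : monomial f (1:K) = monomial (f - e) 1 * monomial e 1 := by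
      rw [mon_mul, tsub_add_cancel_of_le hef]
    rw [this]
    exact Ideal.mul_mem_left _ _ (Ideal.subset_span ⟨e, he, rfl⟩)

def SetT (d : ℕ) : Set F3 := {f | f.degree = d}

def SetS (s d : ℕ) : Set F3 := {f | f.degree = d ∧ ∃ e ∈ Es s, e ≤ f}

lemma inter_eq (s d : ℕ) :
    (Submodule.restrictScalars K
        ((Ideal.span {X 0 * X 1, X 0 * X 2, X 1 * X 2} ^ s : Ideal (MvPolynomial (Fin 3) K)) :
          Submodule (MvPolynomial (Fin 3) K) (MvPolynomial (Fin 3) K)) ⊓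
      homogeneousSubmodule (Fin 3) K d : Submodule K (MvPolynomial (Fin 3) K))
      = restrictSupport K (SetS s d) := by
  ext p
  rw [Submodule.mem_inf, homogeneousSubmodule_eq_finsupp_supported, Submodule.restrictScalars_mem,
    span_pow]
  show _ ↔ p ∈ AddMonoidAlgebra.supported K K (SetS s d)
  rw [AddMonoidAlgebra.mem_supported, AddMonoidAlgebra.mem_supported]
  constructor
  · rintro ⟨hpI, hpd⟩
    intro f hf
    have hf' : coeff f p ≠ 0 := MvPolynomial.mem_support_iff.mp hf
    exact ⟨hpd hf, coeff_span_monomials hpI f hf'⟩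
  · intro hsub
    constructor
    · rw [as_sum p]
      refine Ideal.sum_mem _ ?_
      intro v hv
      have hvS : v ∈ SetS s d := hsub hv
      have : monomial v (coeff v p) = C (coeff v p) * monomial v 1 := by
        rw [C_mul_monomial, mul_one]
      rw [this]
      exact Ideal.mul_mem_left _ _ (monomial_mem_span_iff.mpr hvS.2)
    · intro f hf
      exact (hsub hf).1

lemma finrank_of_equiv (A : Set F3) (Fi : Finset (ℕ × ℕ)) (e : A ≃ Fi) :
    Module.finrank K (restrictSupport K A) = Fi.card := by
  have : Fintype A := Fintype.ofEquiv _ e.symm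
  rw [Module.finrank_eq_card_basis (basisRestrictSupport K A), Fintype.card_congr e,
    Fintype.card_coe]


def B (d : ℕ) : Finset (ℕ × ℕ) :=
  (Finset.range (d+1) ×ˢ Finset.range (d+1)).filter fun p => p.1 + p.2 ≤ d

lemma mem_B {d : ℕ} {p : ℕ × ℕ} : p ∈ B d ↔ p.1 + p.2 ≤ d := by
  simp only [B, Finset.mem_filter, Finset.mem_product, Finset.mem_range]
  omega

lemma choose_two_succ (m : ℕ) : (m+1).choose 2 = m.choose 2 + m := by
  rw [Nat.choose_succ_succ m 1, Nat.choose_one_right, Nat.add_comm]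

lemma card_B (d : ℕ) : (B d).card = (d+2).choose 2 := by
  induction d with
  | zero => decide
  | succ n ih =>
    have hsplit : B (n+1) = B n ∪ Finset.HasAntidiagonal.antidiagonal (n+1) := by
      ext p
      rw [Finset.mem_union, mem_B, mem_B, Finset.HasAntidiagonal.mem_antidiagonal]
      omega
    have hdisj : Disjoint (B n) (Finset.HasAntidiagonal.antidiagonal (n+1)) := by
      rw [Finset.disjoint_left]
      intro p hp hq
      rw [mem_B] at hp
      rw [Finset.HasAntidiagonal.mem_antidiagonal] at hq
      omega
    rw [hsplit, Finset.card_union_of_disjoint hdisj, ih, Finset.Nat.card_antidiagonal,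
      choose_two_succ (n+2)]

def BS (s d : ℕ) : Finset (ℕ × ℕ) :=
  (B d).filter fun p => s ≤ p.1 + p.2 ∧ p.1 + s ≤ d ∧ p.2 + s ≤ d

def BC (s d : ℕ) : Finset (ℕ × ℕ) :=
  (B d).filter fun p => ¬(s ≤ p.1 + p.2 ∧ p.1 + s ≤ d ∧ p.2 + s ≤ d)

lemma mem_BS {s d : ℕ} {p : ℕ × ℕ} :
    p ∈ BS s d ↔ p.1 + p.2 ≤ d ∧ s ≤ p.1 + p.2 ∧ p.1 + s ≤ d ∧ p.2 + s ≤ d := by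
  rw [BS, Finset.mem_filter, mem_B]

lemma mem_BC {s d : ℕ} {p : ℕ × ℕ} :
    p ∈ BC s d ↔ p.1 + p.2 ≤ d ∧ ¬(s ≤ p.1 + p.2 ∧ p.1 + s ≤ d ∧ p.2 + s ≤ d) := by
  rw [BC, Finset.mem_filter, mem_B]

lemma card_BS_add_BC (s d : ℕ) : (BS s d).card + (BC s d).card = (B d).card :=
  Finset.card_filter_add_card_filter_not _

lemma card_BS_two_mul (s : ℕ) : (BS s (2*s)).card = (s+2).choose 2 := by
  rw [← card_B s]
  refine Finset.card_bij' (fun p _ => (s - p.1, s - p.2)) (fun p _ => (s - p.1, s - p.2))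
    ?_ ?_ ?_ ?_
  · rintro ⟨a1, a2⟩ ha
    rw [mem_BS] at ha
    rw [mem_B]
    dsimp only at *
    omega
  · rintro ⟨a1, a2⟩ ha
    rw [mem_B] at ha
    rw [mem_BS]
    dsimp only at *
    omega
  · rintro ⟨a1, a2⟩ ha
    rw [mem_BS] at ha
    dsimp only at *
    rw [Prod.mk.injEq]
    omega
  · rintro ⟨a1, a2⟩ ha
    rw [mem_B] at ha
    dsimp only at *
    rw [Prod.mk.injEq]
    omega

lemma card_BC_succ {s d : ℕ} (hd : 2*s ≤ d) : (BC s (d+1)).card = (BC s d).card := by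
  refine Finset.card_bij'
    (fun p _ => if p.1 + p.2 < s then p else if d + 1 < p.1 + s then (p.1 - 1, p.2) else (p.1, p.2 - 1))
    (fun p _ => if p.1 + p.2 < s then p else if d < p.1 + s then (p.1 + 1, p.2) else (p.1, p.2 + 1))
    ?_ ?_ ?_ ?_
  · rintro ⟨a1, a2⟩ ha
    rw [mem_BC] at ha
    dsimp only at *
    split_ifs <;> rw [mem_BC] <;> dsimp only <;> omega
  · rintro ⟨a1, a2⟩ ha
    rw [mem_BC] at ha
    dsimp only at *
    split_ifs <;> rw [mem_BC] <;> dsimp only <;> omega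
  · intro a ha
    rw [mem_BC] at ha
    beta_reduce
    by_cases h1 : a.1 + a.2 < s
    · rw [if_pos h1, if_pos h1]
    · rw [if_neg h1]
      by_cases h2 : d + 1 < a.1 + s
      · rw [if_pos h2]
        have c1 : ¬((a.1 - 1, a.2).1 + (a.1 - 1, a.2).2 < s) := by dsimp only; omega
        have c2 : d < (a.1 - 1, a.2).1 + s := by dsimp only; omega
        rw [if_neg c1, if_pos c2]
        show (a.1 - 1 + 1, a.2) = a
        conv_rhs => rw [← Prod.mk.eta (p := a)]
        rw [Prod.mk.injEq]
        exact ⟨by omega, rfl⟩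
      · rw [if_neg h2]
        have c1 : ¬((a.1, a.2 - 1).1 + (a.1, a.2 - 1).2 < s) := by dsimp only; omega
        have c2 : ¬(d < (a.1, a.2 - 1).1 + s) := by dsimp only; omega
        rw [if_neg c1, if_neg c2]
        show (a.1, a.2 - 1 + 1) = a
        conv_rhs => rw [← Prod.mk.eta (p := a)]
        rw [Prod.mk.injEq]
        exact ⟨rfl, by omega⟩
  · intro a ha
    rw [mem_BC] at ha
    beta_reduce
    by_cases h1 : a.1 + a.2 < s
    · rw [if_pos h1, if_pos h1]
    · rw [if_neg h1]
      by_cases h2 : d < a.1 + s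
      · rw [if_pos h2]
        have c1 : ¬((a.1 + 1, a.2).1 + (a.1 + 1, a.2).2 < s) := by dsimp only; omega
        have c2 : d + 1 < (a.1 + 1, a.2).1 + s := by dsimp only; omega
        rw [if_neg c1, if_pos c2]
        show (a.1 + 1 - 1, a.2) = a
        conv_rhs => rw [← Prod.mk.eta (p := a)]
        rw [Prod.mk.injEq]
        exact ⟨by omega, rfl⟩
      · rw [if_neg h2]
        have c1 : ¬((a.1, a.2 + 1).1 + (a.1, a.2 + 1).2 < s) := by dsimp only; omega
        have c2 : ¬(d + 1 < (a.1, a.2 + 1).1 + s) := by dsimp only; omega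
        rw [if_neg c1, if_neg c2]
        show (a.1, a.2 + 1 - 1) = a
        conv_rhs => rw [← Prod.mk.eta (p := a)]
        rw [Prod.mk.injEq]
        exact ⟨rfl, by omega⟩


lemma exists_e_iff (s : ℕ) (f : F3) :
    (∃ e ∈ Es s, e ≤ f) ↔
      (2*s ≤ f 0 + f 1 + f 2 ∧ s ≤ f 0 + f 1 ∧ s ≤ f 0 + f 2 ∧ s ≤ f 1 + f 2) := by
  constructor
  · rintro ⟨e, ⟨a, b, c, hs, rfl⟩, hle⟩
    rw [Finsupp.le_def] at hle
    have h0 := hle 0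
    have h1 := hle 1
    have h2 := hle 2
    rw [trip_apply0] at h0
    rw [trip_apply1] at h1
    rw [trip_apply2] at h2
    omega
  · rintro ⟨hd, h01, h02, h12⟩
    have key : ∀ a b c : ℕ, a + b + c = s → a + b ≤ f 0 → a + c ≤ f 1 → b + c ≤ f 2 →
        (∃ e ∈ Es s, e ≤ f) := by
      intro a b c h ha hb hc
      refine ⟨trip (a+b) (a+c) (b+c), ⟨a, b, c, h, rfl⟩, ?_⟩
      rw [Finsupp.le_def]
      intro i
      fin_cases i <;> simpa
    by_cases hBC : s ≤ f 1 ∧ s ≤ f 2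
    · exact key 0 0 s (by omega) (by omega) (by omega) (by omega)
    by_cases hAC : s ≤ f 0 ∧ s ≤ f 2
    · exact key 0 s 0 (by omega) (by omega) (by omega) (by omega)
    by_cases hAB : s ≤ f 0 ∧ s ≤ f 1
    · exact key s 0 0 (by omega) (by omega) (by omega) (by omega)
    by_cases hA : s ≤ f 0
    · exact key (s - f 2) (s - f 1) (f 1 + f 2 - s) (by omega) (by omega) (by omega) (by omega)
    by_cases hB : f 1 ≤ s
    · exact key (f 0 + f 1 - s) (s - f 1) (s - f 0) (by omega) (by omega) (by omega) (by omega)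
    · exact key (s - f 2) (f 0 + f 2 - s) (s - f 0) (by omega) (by omega) (by omega) (by omega)

noncomputable def setPairEquiv (A : Set F3) (Fi : Finset (ℕ × ℕ)) (d : ℕ)
    (h1 : ∀ f : F3, f ∈ A ↔ f.degree = d ∧ (f 0, f 1) ∈ Fi)
    (h2 : ∀ p ∈ Fi, p.1 + p.2 ≤ d) : A ≃ Fi where
  toFun x := ⟨(x.1 0, x.1 1), ((h1 x.1).mp x.2).2⟩
  invFun p := ⟨trip p.1.1 p.1.2 (d - p.1.1 - p.1.2), by
    refine (h1 _).mpr ⟨?_, ?_⟩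
    · have := h2 p.1 p.2
      rw [degree_eq, trip_apply0, trip_apply1, trip_apply2]
      omega
    · rw [trip_apply0, trip_apply1]
      exact p.2⟩
  left_inv := by
    rintro ⟨f, hf⟩
    have hd : f.degree = d := ((h1 f).mp hf).1
    rw [degree_eq] at hd
    apply Subtype.ext
    show trip (f 0) (f 1) (d - f 0 - f 1) = f
    conv_rhs => rw [eq_trip f]
    exact trip_ext rfl rfl (by omega)
  right_inv := by
    rintro ⟨⟨u, v⟩, hp⟩
    apply Subtype.ext
    show (trip u v (d - u - v) 0, trip u v (d - u - v) 1) = (u, v)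
    rw [trip_apply0, trip_apply1]

lemma setT_iff (d : ℕ) (f : F3) : f ∈ SetT d ↔ f.degree = d ∧ (f 0, f 1) ∈ B d := by
  rw [SetT, Set.mem_setOf_eq, mem_B]
  dsimp only
  rw [degree_eq]
  omega

lemma setS_iff {s d : ℕ} (hd : 2*s ≤ d) (f : F3) :
    f ∈ SetS s d ↔ f.degree = d ∧ (f 0, f 1) ∈ BS s d := by
  rw [SetS, Set.mem_setOf_eq, mem_BS, exists_e_iff]
  dsimp only
  rw [degree_eq]
  constructor
  · rintro ⟨h, h'⟩
    exact ⟨h, by omega⟩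
  · rintro ⟨h, h'⟩
    exact ⟨h, by omega⟩

lemma setS_empty {s d : ℕ} (hd : d < 2*s) : SetS s d = ∅ := by
  ext f
  simp only [SetS, Set.mem_setOf_eq, Set.mem_empty_iff_false, iff_false]
  rintro ⟨hdeg, hdiv⟩
  rw [exists_e_iff] at hdiv
  rw [degree_eq] at hdeg
  omega


lemma hom_eq_restrict (d : ℕ) :
    homogeneousSubmodule (Fin 3) K d = restrictSupport K (SetT d) :=
  homogeneousSubmodule_eq_finsupp_supported (Fin 3) K d

lemma finrank_hom (d : ℕ) :
    Module.finrank K (homogeneousSubmodule (Fin 3) K d) = (d+2).choose 2 := by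
  rw [hom_eq_restrict, finrank_of_equiv (SetT d) (B d)
    (setPairEquiv (SetT d) (B d) d (setT_iff d) (fun p hp => mem_B.mp hp)), card_B]

lemma hilb_lt {s d : ℕ} (hd : d < 2*s) :
    hilbQuot ((Ideal.span {X 0 * X 1, X 0 * X 2, X 1 * X 2} : Ideal (MvPolynomial (Fin 3) K)) ^ s) d
      = (d+2).choose 2 := by
  rw [hilbQuot, inter_eq, setS_empty hd, finrank_hom]
  have : restrictSupport K (∅ : Set F3) = ⊥ := by
    rw [restrictSupport, AddMonoidAlgebra.supported_eq_span_single, Set.image_empty, Submodule.span_empty]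
  rw [this, finrank_bot, Nat.sub_zero]

lemma hilb_ge {s d : ℕ} (hd : 2*s ≤ d) :
    hilbQuot ((Ideal.span {X 0 * X 1, X 0 * X 2, X 1 * X 2} : Ideal (MvPolynomial (Fin 3) K)) ^ s) d
      = (BC s d).card := by
  have hle : ∀ p ∈ BS s d, p.1 + p.2 ≤ d := fun p hp => (mem_BS.mp hp).1
  rw [hilbQuot, inter_eq, finrank_hom,
    finrank_of_equiv (SetS s d) (BS s d)
      (setPairEquiv (SetS s d) (BS s d) d (setS_iff hd) hle)]
  have h := card_BS_add_BC s d
  rw [card_B] at h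
  omega

lemma coeff_sum (N n : ℕ) :
    (PowerSeries.coeff n) (∑ i ∈ Finset.range N,
        PowerSeries.C (R := ℤ) ((i : ℤ) + 1) * PowerSeries.X ^ i)
      = if n < N then (n : ℤ) + 1 else 0 := by
  rw [map_sum]
  simp only [PowerSeries.coeff_C_mul, PowerSeries.coeff_X_pow, mul_ite, mul_one, mul_zero]
  rw [Finset.sum_ite_eq (Finset.range N) n (fun i => (i : ℤ) + 1)]
  simp [Finset.mem_range]

lemma coeff_cx (n : ℕ) (a : ℤ) (m : ℕ) :
    (PowerSeries.coeff n) (PowerSeries.C (R := ℤ) a * PowerSeries.X ^ m)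
      = if n = m then a else 0 := by
  rw [PowerSeries.coeff_C_mul, PowerSeries.coeff_X_pow, mul_ite, mul_one, mul_zero]




end HilbC3

/-- For `I = (x₁x₂, x₁x₃, x₂x₃) ⊆ K[x₁,x₂,x₃]` and `s ≥ 2`, the Hilbert
series of `R/I^s` is
`(Σ_{i=0}^{2s-1} (i+1) t^i - (C(s+2,2) - 2s - 1) t^{2s}) / (1 - t)`. -/
theorem hilbertSeries_powers_C3 (K : Type) [Field K]
    (I : Ideal (MvPolynomial (Fin 3) K))
    (hI : I = Ideal.span {X 0 * X 1, X 0 * X 2, X 1 * X 2})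
    (s : ℕ) (hs : 2 ≤ s) :
    (PowerSeries.mk fun d => (hilbQuot (I ^ s) d : ℤ)) * (1 - PowerSeries.X) =
      (∑ i ∈ Finset.range (2 * s), PowerSeries.C (R := ℤ) ((i : ℤ) + 1) * PowerSeries.X ^ i) -
        PowerSeries.C (R := ℤ) (((s + 2).choose 2 : ℤ) - 2 * s - 1) *
          PowerSeries.X ^ (2 * s) := by
  subst hI
  apply PowerSeries.ext
  intro n
  rw [mul_sub, mul_one, map_sub, map_sub, HilbC3.coeff_sum, HilbC3.coeff_cx,
    PowerSeries.coeff_mk]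
  cases n with
  | zero =>
    rw [PowerSeries.coeff_zero_mul_X, HilbC3.hilb_lt (by omega)]
    rw [if_pos (by omega), if_neg (by omega)]
    norm_num
  | succ m =>
    rw [PowerSeries.coeff_succ_mul_X, PowerSeries.coeff_mk]
    rcases lt_trichotomy (m+1) (2*s) with hlt | heq | hgt
    · rw [HilbC3.hilb_lt hlt, HilbC3.hilb_lt (by omega : m < 2*s),
        if_pos (by omega), if_neg (by omega)]
      have h := HilbC3.choose_two_succ (m+2)
      rw [show m+2+1 = m+1+2 by omega] at h
      push_cast
      omega
    · rw [HilbC3.hilb_ge (by omega : 2*s ≤ m+1), HilbC3.hilb_lt (by omega : m < 2*s),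
        if_neg (by omega), if_pos heq]
      have h1 := HilbC3.card_BS_add_BC s (2*s)
      rw [HilbC3.card_B] at h1
      have h2 := HilbC3.card_BS_two_mul s
      have h3 := HilbC3.choose_two_succ (2*s+1)
      rw [show 2*s+1+1 = 2*s+2 by omega] at h3
      have hm2 : m + 2 = 2*s + 1 := by omega
      rw [hm2, heq]
      omega
    · rw [HilbC3.hilb_ge (by omega : 2*s ≤ m+1), HilbC3.hilb_ge (by omega : 2*s ≤ m),
        if_neg (by omega), if_neg (by omega)]
      rw [HilbC3.card_BC_succ (by omega : 2*s ≤ m)]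
      ring
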